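/- Assume that for every h ∈ G with h ≠ e, the unitary U_S(h) is not a complex scalar multiple of the identity 1_n. Let A be a G×G complex matrix and fix frame orientations g_i, g_j ∈ G. Then Tr(Tr_S(𝐔 ρ 𝐔†) · P A P†) = Tr(Tr_S(ρ) · A) for every density matrix ρ on ℂ^G ⊗ ℂ^n, where P = P^{g_i,g_j} is the parity-swap unitary, if and only if A is diagonal in the group basis, i.e. ⟨g|A|g'⟩ = 0 whenever g ≠ g'. -/

import Mathlib

open Matrix Kronecker
open scoped ComplexOrder

variable {G : Type*} [Fintype G] [CommGroup G] [DecidableEq G] {n : ℕ}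

/-- The QRF-transformation unitary `𝐔^{g_i,g_j} = Σ_g |g g_i⟩⟨g_j g⁻¹| ⊗ U_S(g)`. -/
noncomputable def Uqrf (U : G →* Matrix.unitaryGroup (Fin n) ℂ) (gi gj : G) :
    Matrix (G × Fin n) (G × Fin n) ℂ :=
  ∑ g : G, Matrix.single (g * gi) (gj * g⁻¹) (1 : ℂ) ⊗ₖ
    (U g : Matrix (Fin n) (Fin n) ℂ)

/-- The partial trace over the system factor `ℂ^n`. -/
noncomputable def trS (ρ : Matrix (G × Fin n) (G × Fin n) ℂ) : Matrix G G ℂ :=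
  Matrix.of fun a b => ∑ s : Fin n, ρ (a, s) (b, s)

/-- The parity-swap unitary `P^{g_i,g_j} = Σ_g |g_i g⟩⟨g_j g⁻¹|` on `ℂ^G`. -/
noncomputable def Pswap (gi gj : G) : Matrix G G ℂ :=
  ∑ g : G, Matrix.single (gi * g) (gj * g⁻¹) (1 : ℂ)

set_option linter.unusedSectionVars false in
lemma Pswap_apply (gi gj a b : G) :
    Pswap gi gj a b = if b = gj * gi * a⁻¹ then 1 else 0 := by
  classical
  simp only [Pswap, Matrix.sum_apply, Matrix.single, Matrix.of_apply]
  rw [Finset.sum_congr rfl (g := fun g =>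
      if g = gi⁻¹ * a then (if b = gj * gi * a⁻¹ then (1:ℂ) else 0) else 0)
    (fun g _ => ?_)]
  · simp
  · beta_reduce
    show (if gi * g = a ∧ gj * g⁻¹ = b then (1:ℂ) else 0)
      = if g = gi⁻¹ * a then (if b = gj * gi * a⁻¹ then (1:ℂ) else 0) else 0
    by_cases h1 : g = gi⁻¹ * a
    · subst h1
      have e1 : gi * (gi⁻¹ * a) = a := by group
      have e2 : gj * (gi⁻¹ * a)⁻¹ = gj * gi * a⁻¹ := by
        rw [_root_.mul_inv_rev, inv_inv, mul_comm a⁻¹ gi, ← mul_assoc]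
      by_cases h2 : b = gj * gi * a⁻¹
      · rw [if_pos ⟨e1, by rw [e2, ← h2]⟩, if_pos rfl, if_pos h2]
      · rw [if_pos rfl, if_neg h2, if_neg]
        rintro ⟨-, h3⟩
        exact h2 (by rw [← h3, e2])
    · rw [if_neg h1, if_neg]
      rintro ⟨h2, -⟩
      exact h1 (by rw [← h2]; group)

lemma Uqrf_apply (U : G →* Matrix.unitaryGroup (Fin n) ℂ) (gi gj : G)
    (p q : G × Fin n) :
    Uqrf U gi gj p q =
      if q.1 = gj * gi * p.1⁻¹ then
        (U (p.1 * gi⁻¹) : Matrix (Fin n) (Fin n) ℂ) p.2 q.2 else 0 := by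
  classical
  simp only [Uqrf, Matrix.sum_apply, Matrix.kroneckerMap_apply, Matrix.single,
    Matrix.of_apply]
  rw [Finset.sum_congr rfl (g := fun g =>
      if g = p.1 * gi⁻¹ then
        (if q.1 = gj * gi * p.1⁻¹ then (U (p.1 * gi⁻¹) : Matrix (Fin n) (Fin n) ℂ) p.2 q.2
          else 0) else 0)
    (fun g _ => ?_)]
  · simp
  · beta_reduce
    show (if g * gi = p.1 ∧ gj * g⁻¹ = q.1 then (1:ℂ) else 0)
        * (U g : Matrix (Fin n) (Fin n) ℂ) p.2 q.2 = _
    by_cases h1 : g = p.1 * gi⁻¹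
    · subst h1
      have e1 : p.1 * gi⁻¹ * gi = p.1 := by group
      have e2 : gj * (p.1 * gi⁻¹)⁻¹ = gj * gi * p.1⁻¹ := by
        rw [_root_.mul_inv_rev, inv_inv, ← mul_assoc]
      by_cases h2 : q.1 = gj * gi * p.1⁻¹
      · rw [if_pos ⟨e1, by rw [e2, ← h2]⟩, one_mul, if_pos rfl, if_pos h2]
      · rw [if_pos rfl, if_neg h2, if_neg, zero_mul]
        rintro ⟨-, h3⟩
        exact h2 (by rw [← h3, e2])
    · rw [if_neg h1, if_neg, zero_mul]
      rintro ⟨h2, -⟩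
      exact h1 (by rw [← h2]; group)

set_option linter.unusedSectionVars false in
lemma U_star_mul (U : G →* Matrix.unitaryGroup (Fin n) ℂ) (c d : G) (u v : Fin n) :
    ∑ s : Fin n, star ((U c : Matrix (Fin n) (Fin n) ℂ) s v) *
      (U d : Matrix (Fin n) (Fin n) ℂ) s u =
    (U (c⁻¹ * d) : Matrix (Fin n) (Fin n) ℂ) v u := by
  have h1 : star ((U c : Matrix (Fin n) (Fin n) ℂ)) * (U d : Matrix (Fin n) (Fin n) ℂ)
      = (U (c⁻¹ * d) : Matrix (Fin n) (Fin n) ℂ) := by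
    rw [← Matrix.UnitaryGroup.inv_val, ← Matrix.UnitaryGroup.mul_val, ← map_inv]
    exact congrArg Subtype.val (MonoidHom.map_mul U c⁻¹ d).symm
  calc ∑ s : Fin n, star ((U c : Matrix (Fin n) (Fin n) ℂ) s v) *
        (U d : Matrix (Fin n) (Fin n) ℂ) s u
      = (star ((U c : Matrix (Fin n) (Fin n) ℂ)) * (U d : Matrix (Fin n) (Fin n) ℂ)) v u := by
        simp [Matrix.mul_apply, Matrix.star_apply]
    _ = _ := by rw [h1]

lemma WrW (U : G →* Matrix.unitaryGroup (Fin n) ℂ) (gi gj : G)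
    (ρ : Matrix (G × Fin n) (G × Fin n) ℂ) (a b : G) :
    ∑ s : Fin n, (Uqrf U gi gj * ρ * (Uqrf U gi gj)ᴴ) (a, s) (b, s) =
      ∑ u : Fin n, ∑ v : Fin n, (U (a * b⁻¹) : Matrix (Fin n) (Fin n) ℂ) v u *
        ρ (gj * gi * a⁻¹, u) (gj * gi * b⁻¹, v) := by
  have step1 : ∀ s : Fin n, (Uqrf U gi gj * ρ * (Uqrf U gi gj)ᴴ) (a, s) (b, s)
      = ∑ u : Fin n, ∑ v : Fin n,
          (U (a * gi⁻¹) : Matrix (Fin n) (Fin n) ℂ) s u *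
          ρ (gj * gi * a⁻¹, u) (gj * gi * b⁻¹, v) *
          star ((U (b * gi⁻¹) : Matrix (Fin n) (Fin n) ℂ) s v) := by
    intro s
    simp only [Matrix.mul_apply, Matrix.conjTranspose_apply, Uqrf_apply,
      Fintype.sum_prod_type, ite_mul, mul_ite, zero_mul, mul_zero, star_zero,
      Finset.sum_ite_eq, Finset.sum_ite_eq', Finset.mem_univ, if_true]
    simp [apply_ite (starRingEnd ℂ), Finset.sum_ite_eq, Finset.sum_ite_eq',
      Finset.sum_mul, Finset.mul_sum, mul_ite, ite_mul, mul_zero, zero_mul]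
    exact Finset.sum_comm
  rw [Finset.sum_congr rfl fun s _ => step1 s]
  rw [Finset.sum_comm]
  refine Finset.sum_congr rfl fun u _ => ?_
  rw [Finset.sum_comm]
  refine Finset.sum_congr rfl fun v _ => ?_
  have e3 : (b * gi⁻¹)⁻¹ * (a * gi⁻¹) = a * b⁻¹ := by
    rw [_root_.mul_inv_rev, inv_inv, mul_comm gi b⁻¹, mul_assoc b⁻¹ gi,
      mul_comm a gi⁻¹, mul_inv_cancel_left, mul_comm b⁻¹ a]
  rw [← e3, ← U_star_mul U (b * gi⁻¹) (a * gi⁻¹) u v, Finset.sum_mul]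
  refine Finset.sum_congr rfl fun s _ => by ring

lemma PAP_apply (gi gj : G) (A : Matrix G G ℂ) (b a : G) :
    (Pswap gi gj * A * (Pswap gi gj)ᴴ) b a = A (gj * gi * b⁻¹) (gj * gi * a⁻¹) := by
  simp [Matrix.mul_apply, Matrix.conjTranspose_apply, Pswap_apply,
    apply_ite (starRingEnd ℂ), ite_mul, mul_ite, zero_mul, mul_zero,
    Finset.sum_ite_eq, Finset.sum_ite_eq']

lemma rhs_eval (ρ : Matrix (G × Fin n) (G × Fin n) ℂ) (A : Matrix G G ℂ) :
    (trS ρ * A).trace = ∑ x : G, ∑ y : G, ∑ u : Fin n, ρ (x, u) (y, u) * A y x := by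
  simp [Matrix.trace, Matrix.diag, Matrix.mul_apply, trS, Finset.sum_mul]

set_option linter.unusedSectionVars false in
lemma trace_mul' (M N : Matrix G G ℂ) :
    (M * N).trace = ∑ a : G, ∑ b : G, M a b * N b a := by
  simp [Matrix.trace, Matrix.diag, Matrix.mul_apply]

lemma lhs_eval (U : G →* Matrix.unitaryGroup (Fin n) ℂ) (gi gj : G)
    (ρ : Matrix (G × Fin n) (G × Fin n) ℂ) (A : Matrix G G ℂ) :
    (trS (Uqrf U gi gj * ρ * (Uqrf U gi gj)ᴴ) * (Pswap gi gj * A * (Pswap gi gj)ᴴ)).trace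
      = ∑ x : G, ∑ y : G, ∑ u : Fin n, ∑ v : Fin n,
          (U (y * x⁻¹) : Matrix (Fin n) (Fin n) ℂ) v u * ρ (x, u) (y, v) * A y x := by
  have h2 : ∀ x : G, gj * gi * (gj * gi * x⁻¹)⁻¹ = x := by
    intro x
    rw [_root_.mul_inv_rev, inv_inv, mul_comm x (gj * gi)⁻¹, mul_inv_cancel_left]
  have h3 : ∀ x y : G, gj * gi * x⁻¹ * (gj * gi * y⁻¹)⁻¹ = y * x⁻¹ := by
    intro x y
    rw [_root_.mul_inv_rev, inv_inv, mul_comm y (gj * gi)⁻¹, mul_comm (gj * gi) x⁻¹,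
      mul_assoc, mul_inv_cancel_left, mul_comm x⁻¹ y]
  rw [trace_mul']
  simp only [trS, Matrix.of_apply, PAP_apply, WrW]
  refine (Fintype.sum_equiv ((Equiv.inv G).trans (Equiv.mulLeft (gj * gi))) _ _
    fun x => ?_).symm
  refine Fintype.sum_equiv ((Equiv.inv G).trans (Equiv.mulLeft (gj * gi))) _ _
    fun y => ?_
  simp only [Equiv.trans_apply, Equiv.inv_apply, Equiv.coe_mulLeft, h2, h3,
    Finset.sum_mul]

set_option linter.unusedSectionVars false in
lemma sum_indicator_pair {α : Type*} [Fintype α] [DecidableEq α] (a b : α)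
    (x y : ℂ) (f : α → ℂ) :
    ∑ p : α, ((if p = a then x else 0) + (if p = b then y else 0)) * f p
      = x * f a + y * f b := by
  rw [Finset.sum_congr rfl (fun p _ => add_mul _ _ _), Finset.sum_add_distrib]
  simp [ite_mul, Finset.sum_ite_eq']

set_option linter.unusedSectionVars false in
lemma sum4 (F : (G × Fin n) → (G × Fin n) → ℂ) :
    ∑ x : G, ∑ y : G, ∑ u : Fin n, ∑ v : Fin n, F (x, u) (y, v)
      = ∑ p : G × Fin n, ∑ q : G × Fin n, F p q := by
  rw [Fintype.sum_prod_type]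
  refine Finset.sum_congr rfl fun x _ => ?_
  simp only [Fintype.sum_prod_type]
  exact Finset.sum_comm

/-- QRF-invariant frame observable averages. Assuming no nontrivial
translation acts as a scalar, the expectation value of a frame observable `A` in the
reduced frame state agrees with the parity-swapped expectation in the other QRF
perspective for every global density matrix iff `A` is diagonal in the group basis. -/
theorem frame_averages_invariant_iff (hn : 1 ≤ n)
    (U : G →* Matrix.unitaryGroup (Fin n) ℂ)
    (hU : ∀ h : G, h ≠ 1 →
      ¬ ∃ c : ℂ, (U h : Matrix (Fin n) (Fin n) ℂ) = c • (1 : Matrix (Fin n) (Fin n) ℂ))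
    (gi gj : G) (A : Matrix G G ℂ) :
    (∀ ρ : Matrix (G × Fin n) (G × Fin n) ℂ, ρ.PosSemidef → ρ.trace = 1 →
        (trS (Uqrf U gi gj * ρ * (Uqrf U gi gj)ᴴ) *
            (Pswap gi gj * A * (Pswap gi gj)ᴴ)).trace = (trS ρ * A).trace) ↔
      (∀ g g' : G, g ≠ g' → A g g' = 0) := by
  constructor
  · -- hard direction
    intro H g g' hgg
    -- pick entries where `U (g * g'⁻¹)` differs from the identity
    have hne : g * g'⁻¹ ≠ 1 := fun hh => hgg (by rwa [mul_inv_eq_one] at hh)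
    have hne1 : (U (g * g'⁻¹) : Matrix (Fin n) (Fin n) ℂ) ≠ 1 := fun e =>
      hU _ hne ⟨1, by simpa using e⟩
    obtain ⟨v, u, hvu⟩ : ∃ v u, (U (g * g'⁻¹) : Matrix (Fin n) (Fin n) ℂ) v u ≠
        (1 : Matrix (Fin n) (Fin n) ℂ) v u := by
      by_contra hc
      push_neg at hc
      exact hne1 (by ext v u; exact hc v u)
    set a : G × Fin n := (g', u) with ha
    set b : G × Fin n := (g, v) with hb
    have hab : a ≠ b := by
      intro e
      exact hgg (congrArg Prod.fst e).symm
    -- the test states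
    set Ψ : (G × Fin n) → (G × Fin n) → ℂ := fun p q =>
      (U (q.1 * p.1⁻¹) : Matrix (Fin n) (Fin n) ℂ) q.2 p.2 * A q.1 p.1 -
        (if q.2 = p.2 then A q.1 p.1 else 0) with hΨ
    have key : ∀ lam μ : ℂ, star lam = μ → μ * lam = 1 →
        Ψ a a + Ψ b a * lam + Ψ a b * μ + Ψ b b * (lam * μ) = 0 := by
      intro lam μ hμ hμlam
      have hlamμ : lam * μ = 1 := by rw [mul_comm]; exact hμlam
      set w : (G × Fin n) → ℂ := fun p =>
        (if p = a then 1 else 0) + (if p = b then lam else 0) with hw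
      have hwa : w a = 1 := by simp [hw, hab]
      have hwb : w b = lam := by simp [hw, Ne.symm hab]
      have hsw : ∀ q, star (w q)
          = (if q = a then 1 else 0) + (if q = b then μ else 0) := by
        intro q
        by_cases h1 : q = a
        · subst h1; simp [hwa, hab]
        · by_cases h2 : q = b
          · subst h2; simp [hwb, Ne.symm hab, hμ]
          · simp [hw, h1, h2]
      set c : ℂ := Complex.ofReal ((Real.sqrt 2)⁻¹) with hc
      set B : Matrix (G × Fin n) (Fin 1) ℂ := Matrix.of (fun p _ => c * w p) with hB
      set ρ : Matrix (G × Fin n) (G × Fin n) ℂ := B * Bᴴ with hρ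
      have hcstar : star c = c := by rw [hc]; exact Complex.conj_ofReal _
      have hcc : c * c = 2⁻¹ := by
        rw [hc, ← Complex.ofReal_mul, ← mul_inv, Real.mul_self_sqrt (by norm_num : (0:ℝ) ≤ 2)]
        push_cast
        norm_num
      have hρ_apply : ∀ p q, ρ p q = 2⁻¹ * (w p * star (w q)) := by
        intro p q
        simp only [hρ, hB, Matrix.mul_apply, Matrix.conjTranspose_apply, Matrix.of_apply]
        rw [Fin.sum_univ_one]
        rw [star_mul', hcstar]
        linear_combination (w p * star (w q)) * hcc
      have hPSD : ρ.PosSemidef := Matrix.posSemidef_self_mul_conjTranspose B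
      have htr : ρ.trace = 1 := by
        simp only [Matrix.trace, Matrix.diag]
        rw [Finset.sum_congr rfl fun p _ => hρ_apply p p, ← Finset.mul_sum]
        rw [Finset.sum_congr rfl (g := fun p =>
            ((if p = a then (1:ℂ) else 0) + (if p = b then lam else 0)) * star (w p))
          (fun p _ => by simp only [hw]), sum_indicator_pair a b 1 lam (fun p => star (w p))]
        rw [hwa, hwb, star_one, hμ]
        rw [one_mul, hlamμ]
        norm_num
      have hE := H ρ hPSD htr
      rw [lhs_eval, rhs_eval] at hE
      have hL : ∑ x : G, ∑ y : G, ∑ u' : Fin n, ∑ v' : Fin n,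
            (U (y * x⁻¹) : Matrix (Fin n) (Fin n) ℂ) v' u' * ρ (x, u') (y, v') * A y x
          = ∑ p : G × Fin n, ∑ q : G × Fin n,
              ((U (q.1 * p.1⁻¹) : Matrix (Fin n) (Fin n) ℂ) q.2 p.2 * A q.1 p.1) * ρ p q := by
        rw [← sum4 (fun p q => ((U (q.1 * p.1⁻¹) : Matrix (Fin n) (Fin n) ℂ) q.2 p.2
          * A q.1 p.1) * ρ p q)]
        exact Finset.sum_congr rfl fun x _ => Finset.sum_congr rfl fun y _ =>
          Finset.sum_congr rfl fun u' _ => Finset.sum_congr rfl fun v' _ => by ring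
      have hR : ∑ x : G, ∑ y : G, ∑ u' : Fin n, ρ (x, u') (y, u') * A y x
          = ∑ p : G × Fin n, ∑ q : G × Fin n,
              (if q.2 = p.2 then A q.1 p.1 else 0) * ρ p q := by
        rw [← sum4 (fun p q => (if q.2 = p.2 then A q.1 p.1 else 0) * ρ p q)]
        refine Finset.sum_congr rfl fun x _ => Finset.sum_congr rfl fun y _ => ?_
        simp [Finset.sum_ite_eq, mul_comm]
      rw [hL, hR] at hE
      have hZ : ∑ p : G × Fin n, ∑ q : G × Fin n, Ψ p q * ρ p q = 0 := by
        rw [hΨ]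
        simp only [sub_mul]
        rw [Finset.sum_congr rfl fun p _ => Finset.sum_sub_distrib _ _, Finset.sum_sub_distrib]
        rw [hE]
        ring
      rw [Finset.sum_congr rfl fun p _ => Finset.sum_congr rfl fun q _ =>
        by rw [hρ_apply p q]] at hZ
      -- collapse inner sums
      have inner : ∀ p, ∑ q : G × Fin n, Ψ p q * (2⁻¹ * (w p * star (w q)))
          = 1 * (2⁻¹ * w p * Ψ p a) + μ * (2⁻¹ * w p * Ψ p b) := by
        intro p
        rw [Finset.sum_congr rfl (g := fun q =>
            ((if q = a then (1:ℂ) else 0) + (if q = b then μ else 0))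
              * (2⁻¹ * w p * Ψ p q))
          (fun q _ => by rw [hsw q]; ring)]
        exact sum_indicator_pair a b 1 μ (fun q => 2⁻¹ * w p * Ψ p q)
      rw [Finset.sum_congr rfl fun p _ => inner p] at hZ
      have outer : ∑ p : G × Fin n,
            (1 * (2⁻¹ * w p * Ψ p a) + μ * (2⁻¹ * w p * Ψ p b))
          = 1 * (2⁻¹ * Ψ a a + μ * 2⁻¹ * Ψ a b) + lam * (2⁻¹ * Ψ b a + μ * 2⁻¹ * Ψ b b) := by
        rw [Finset.sum_congr rfl (g := fun p =>
            ((if p = a then (1:ℂ) else 0) + (if p = b then lam else 0))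
              * (2⁻¹ * Ψ p a + μ * 2⁻¹ * Ψ p b))
          (fun p _ => by rw [hw]; beta_reduce; ring)]
        exact sum_indicator_pair a b 1 lam (fun p => 2⁻¹ * Ψ p a + μ * 2⁻¹ * Ψ p b)
      rw [outer] at hZ
      linear_combination 2 * hZ
    -- use lam = 1 and lam = I
    have hΨaa : Ψ a a = 0 := by
      have : (U (a.1 * a.1⁻¹) : Matrix (Fin n) (Fin n) ℂ) = 1 := by
        rw [mul_inv_cancel]
        exact congrArg Subtype.val (MonoidHom.map_one U)
      simp [hΨ, this, Matrix.one_apply]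
    have hΨbb : Ψ b b = 0 := by
      have : (U (b.1 * b.1⁻¹) : Matrix (Fin n) (Fin n) ℂ) = 1 := by
        rw [mul_inv_cancel]
        exact congrArg Subtype.val (MonoidHom.map_one U)
      simp [hΨ, this, Matrix.one_apply]
    have k1 := key 1 1 (by simp) (by norm_num)
    have kI := key Complex.I (-Complex.I) (by simp [Complex.star_def, Complex.conj_I])
      (by simp [Complex.I_mul_I])
    have hΨab : Ψ a b = 0 := by
      have h1 : Ψ b a + Ψ a b = 0 := by linear_combination k1 - hΨaa - hΨbb
      have h2 : Ψ a b - Ψ b a = 0 := by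
        linear_combination Complex.I * kI + (-Complex.I) * hΨaa +
          (Complex.I * Complex.I * Complex.I) * hΨbb + (Ψ a b - Ψ b a) * Complex.I_mul_I
      linear_combination (h1 + h2) / 2
    -- extract A g g' = 0
    have hΨab' : (U (g * g'⁻¹) : Matrix (Fin n) (Fin n) ℂ) v u * A g g'
        - (if v = u then A g g' else 0) = 0 := by
      rw [hΨ] at hΨab
      simpa [ha, hb] using hΨab
    by_cases hvu' : v = u
    · rw [if_pos hvu'] at hΨab'
      have hprod : ((U (g * g'⁻¹) : Matrix (Fin n) (Fin n) ℂ) v u - 1) * A g g' = 0 := by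
        linear_combination hΨab'
      have hfac : (U (g * g'⁻¹) : Matrix (Fin n) (Fin n) ℂ) v u - 1 ≠ 0 := by
        intro e
        apply hvu
        rw [Matrix.one_apply, if_pos hvu']
        linear_combination e
      exact (mul_eq_zero.mp hprod).resolve_left hfac
    · rw [if_neg hvu'] at hΨab'
      have hprod : (U (g * g'⁻¹) : Matrix (Fin n) (Fin n) ℂ) v u * A g g' = 0 := by
        linear_combination hΨab'
      have hfac : (U (g * g'⁻¹) : Matrix (Fin n) (Fin n) ℂ) v u ≠ 0 := by
        intro e
        apply hvu
        rw [Matrix.one_apply, if_neg hvu']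
        linear_combination e
      exact (mul_eq_zero.mp hprod).resolve_left hfac
  · -- easy direction
    intro hA ρ _ _
    rw [lhs_eval, rhs_eval]
    refine Finset.sum_congr rfl fun x _ => Finset.sum_congr rfl fun y _ => ?_
    by_cases hxy : y = x
    · subst hxy
      have hU1 : (U (y * y⁻¹) : Matrix (Fin n) (Fin n) ℂ) = 1 := by
        rw [mul_inv_cancel]
        exact congrArg Subtype.val (MonoidHom.map_one U)
      rw [hU1]
      refine Finset.sum_congr rfl fun u _ => ?_
      simp [Matrix.one_apply, ite_mul, zero_mul, Finset.sum_ite_eq']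
    · simp [hA y x hxy]
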